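/- Fix κ ∈ (0,∞) and a multigraphon W with ρ := ρ(W) ∈ (0,∞). For t > 0 let Ŵ_t be the multigraphon Ŵ_t(x,y,k) = p(k, F_t^{-1}(x)F_t^{-1}(y)/ρ) for x≠y and Ŵ_t(x,x,k) = 1[2|k]·p(k/2, F_t^{-1}(x)²/(2ρ)), where F_t(x) = ∫_0^x ∫_0^∞ f(t,z,y) dF_0(z) dy with the Cox–Ingersoll–Ross transition density f(t,z,y) (parameters κ,ρ) and F_0(x) = Leb{y∈[0,1] : D(W,y) ≤ x}. Let Ŵ_∞ be the multigraphon Ŵ_∞(x,y,k) = p(k, F^{-1}(x)F^{-1}(y)/ρ) for x≠y and Ŵ_∞(x,x,k) = 1[2|k]·p(k/2, F^{-1}(x)²/(2ρ)), where F(x) = ∫_0^x g(y, κ, κ/ρ) dy is the Gamma(κ, κ/ρ) distribution function. Then for every k ∈ ℕ and every A ∈ A_k: lim_{t→∞} t_=(A, Ŵ_t) = t_=(A, Ŵ_∞). -/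

import Mathlib

open MeasureTheory Filter Set
open scoped Classical ENNReal Topology BigOperators

noncomputable section

/-- `B : ℕ → ℕ → ℕ` is the adjacency matrix of a multigraph on vertex set `{0,…,n-1}`:
symmetric, even diagonal entries (loops counted twice), vanishing outside `[0,n)²`. -/
def IsAdjOn (n : ℕ) (B : ℕ → ℕ → ℕ) : Prop :=
  (∀ i j, B i j = B j i) ∧ (∀ i, 2 ∣ B i i) ∧ ∀ i j, n ≤ i ∨ n ≤ j → B i j = 0

/-- Degree `d(B,i)` of vertex `i` in a multigraph on `n` vertices. -/
def degB (n : ℕ) (B : ℕ → ℕ → ℕ) (i : ℕ) : ℕ := ∑ j ∈ Finset.range n, B i j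

/-- Adjacency matrix of a multigraph on `n` vertices with `m` edges. -/
def IsAdjOnM (n m : ℕ) (B : ℕ → ℕ → ℕ) : Prop :=
  IsAdjOn n B ∧ ∑ i ∈ Finset.range n, ∑ j ∈ Finset.range n, B i j = 2 * m

/-- Top-left `k × k` submatrix (set to zero outside). -/
def subMat (k : ℕ) (B : ℕ → ℕ → ℕ) : ℕ → ℕ → ℕ :=
  fun i j => if i < k ∧ j < k then B i j else 0

/-- Induced homomorphism density `t_=(A,B)` of a `k`-vertex multigraph in an `n`-vertex one. -/
def tEqB (k n : ℕ) (A B : ℕ → ℕ → ℕ) : ℝ :=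
  ((Finset.univ.filter fun φ : Fin k → Fin n =>
      ∀ i j : Fin k, A i j = B (φ i) (φ j)).card : ℝ) / (n : ℝ) ^ k

/-- A multigraphon: symmetric, probability distribution on ℕ in each fibre over `[0,1]²`,
no odd diagonal values. -/
def IsMultigraphon (W : ℝ → ℝ → ℕ → ℝ) : Prop :=
  Measurable (fun p : ℝ × ℝ × ℕ => W p.1 p.2.1 p.2.2) ∧
  (∀ x y k, 0 ≤ W x y k ∧ W x y k ≤ 1) ∧
  (∀ x y k, W x y k = W y x k) ∧
  (∀ x ∈ Icc (0:ℝ) 1, ∀ y ∈ Icc (0:ℝ) 1, (∑' k : ℕ, W x y k) = 1) ∧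
  (∀ x k, W x x (2 * k + 1) = 0)

/-- Induced homomorphism density `t_=(A,W)` of a multigraph in a multigraphon. -/
def tEqW (k : ℕ) (A : ℕ → ℕ → ℕ) (W : ℝ → ℝ → ℕ → ℝ) : ℝ :=
  ∫ x : Fin k → ℝ in Set.univ.pi (fun _ : Fin k => Icc (0:ℝ) 1),
    ∏ i : Fin k, ∏ j ∈ Finset.univ.filter (fun j : Fin k => i ≤ j),
      W (x i) (x j) (A i j)

/-- The average degree `D(W,x)` of a multigraphon at `x`. -/
def degW (W : ℝ → ℝ → ℕ → ℝ) (x : ℝ) : ℝ :=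
  ∫ y in Icc (0:ℝ) 1, ∑' k : ℕ, (k : ℝ) * W x y k

/-- The edge density `ρ(W)` of a multigraphon. -/
def rhoW (W : ℝ → ℝ → ℕ → ℝ) : ℝ := ∫ x in Icc (0:ℝ) 1, degW W x

/-- One step of the edge reconnecting dynamics: the edge `{vold, w}` is replaced by `{vnew, w}`. -/
def stepER (B : ℕ → ℕ → ℕ) (vold w vnew : ℕ) : ℕ → ℕ → ℕ := fun a b =>
  B a b - (if a = vold ∧ b = w then 1 else 0) - (if a = w ∧ b = vold then 1 else 0)
    + (if a = vnew ∧ b = w then 1 else 0) + (if a = w ∧ b = vnew then 1 else 0)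

/-- Transition probability of the edge reconnecting model with parameter `κ`
on multigraphs with `n` vertices and `m` edges. -/
def transER (κ : ℝ) (n m : ℕ) (B B' : ℕ → ℕ → ℕ) : ℝ :=
  ∑ v ∈ Finset.range n, ∑ w ∈ Finset.range n, ∑ u ∈ Finset.range n,
    ((B v w : ℝ) / (2 * m)) * (((degB n B u : ℝ) + κ) / (2 * m + n * κ)) *
      (if B' = stepER B v w u then 1 else 0)

/-- `(X T)_{T≥0}` is an edge reconnecting model with parameter `κ` on `A_n^m`:
a Markov chain with the edge reconnecting transition probabilities. -/
def IsEdgeReconnecting (κ : ℝ) {Ω : Type*} [MeasurableSpace Ω] (μ : Measure Ω)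
    (n m : ℕ) (X : ℕ → Ω → ℕ → ℕ → ℕ) : Prop :=
  (∀ T i j, Measurable fun ω => X T ω i j) ∧
  (∀ T ω, IsAdjOnM n m (X T ω)) ∧
  ∀ (T : ℕ) (past : ℕ → ℕ → ℕ → ℕ) (B' : ℕ → ℕ → ℕ),
    μ {ω | (∀ S ≤ T, X S ω = past S) ∧ X (T + 1) ω = B'} =
      μ {ω | ∀ S ≤ T, X S ω = past S} * ENNReal.ofReal (transER κ n m (past T) B')

/-- Vertex exchangeability of a random adjacency matrix on `n` vertices. -/
def VertexExchangeable {Ω : Type*} [MeasurableSpace Ω] (μ : Measure Ω)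
    (n : ℕ) (X0 : Ω → ℕ → ℕ → ℕ) : Prop :=
  ∀ τ : Equiv.Perm ℕ, (∀ i, n ≤ i → τ i = i) →
    ∀ B : ℕ → ℕ → ℕ, μ {ω | X0 ω = B} = μ {ω | (fun i j => X0 ω (τ i) (τ j)) = B}

/-- Poisson point probability `p(k,λ)`. -/
def poiP (k : ℕ) (l : ℝ) : ℝ := Real.exp (-l) * l ^ k / (Nat.factorial k : ℝ)

/-- Binomial point probability `b(k,n,p)`. -/
def binP (k n : ℕ) (p : ℝ) : ℝ := (n.choose k : ℝ) * p ^ k * (1 - p) ^ (n - k)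

/-- `q(t,h,k,μ)`: time-`t` transition probability from `h` to `k` of the M/M/∞ queue with
arrival rate `μ` and service rate 1. -/
def qMM (t : ℝ) (h k : ℕ) (μ : ℝ) : ℝ :=
  ∑ l ∈ Finset.range (k + 1), binP l h (Real.exp (-t)) * poiP (k - l) ((1 - Real.exp (-t)) * μ)

/-- The multigraphon `W_t` describing the edge reconnecting model on the `n²` time scale. -/
def WtER (W : ℝ → ℝ → ℕ → ℝ) (t : ℝ) : ℝ → ℝ → ℕ → ℝ := fun x y k =>
  if x = y then
    (if 2 ∣ k then
      ∑' h : ℕ, W x x (2 * h) * qMM t h (k / 2) (degW W x ^ 2 / (2 * rhoW W))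
     else 0)
  else ∑' h : ℕ, W x y h * qMM t h k (degW W x * degW W y / rhoW W)

/-- Gamma density `g(x,α,β)`. -/
def gamP (x α β : ℝ) : ℝ :=
  if 0 < x then x ^ (α - 1) * (β ^ α * Real.exp (-(β * x)) / Real.Gamma α) else 0

/-- `τ(α,t) = α/(e^{αt}-1)`. -/
def tauCIR (α t : ℝ) : ℝ := α / (Real.exp (α * t) - 1)

/-- Transition density `f(t,z,y)` of the Cox–Ingersoll–Ross process with parameters `κ, ρ`. -/
def cirDens (κ ρ t z y : ℝ) : ℝ :=
  ∑' i : ℕ, poiP i (z * tauCIR (κ / ρ) t) * gamP y ((κ : ℝ) + i) (tauCIR (κ / ρ) t + κ / ρ)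

/-- The measure `dF₀` where `F₀(x) = Leb{y ∈ [0,1] : D(W,y) ≤ x}`: the push-forward of
Lebesgue measure on `[0,1]` under the average degree function. -/
def F0meas (W : ℝ → ℝ → ℕ → ℝ) : Measure ℝ :=
  Measure.map (degW W) (volume.restrict (Icc (0:ℝ) 1))

/-- The distribution function `F₀(x) = Leb{y ∈ [0,1] : D(W,y) ≤ x}`. -/
def F0fun (W : ℝ → ℝ → ℕ → ℝ) (x : ℝ) : ℝ :=
  (volume {y ∈ Icc (0:ℝ) 1 | degW W y ≤ x}).toReal

/-- Generalized inverse `F₀⁻¹(x) = min{z : F₀(z) ≥ x}`. -/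
def F0inv (W : ℝ → ℝ → ℕ → ℝ) (x : ℝ) : ℝ := sInf {z : ℝ | x ≤ F0fun W z}

/-- The mixed CIR density `f(t,y) = ∫₀^∞ f(t,z,y) dF₀(z)`. -/
def fCIRmix (κ ρ : ℝ) (W : ℝ → ℝ → ℕ → ℝ) (t y : ℝ) : ℝ :=
  ∫ z, cirDens κ ρ t z y ∂(F0meas W)

/-- The distribution function `F_t(x) = ∫₀ˣ f(t,y) dy`. -/
def Fcir (κ ρ : ℝ) (W : ℝ → ℝ → ℕ → ℝ) (t x : ℝ) : ℝ :=
  ∫ y in Ioc (0:ℝ) x, fCIRmix κ ρ W t y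

/-- Generalized inverse `F_t⁻¹(x) = min{z : F_t(z) ≥ x}`. -/
def FcirInv (κ ρ : ℝ) (W : ℝ → ℝ → ℕ → ℝ) (t x : ℝ) : ℝ :=
  sInf {z : ℝ | x ≤ Fcir κ ρ W t z}

/-- The multigraphon `Ŵ_t` describing the edge reconnecting model on the `n³` time scale. -/
def WhatER (κ : ℝ) (W : ℝ → ℝ → ℕ → ℝ) (t : ℝ) : ℝ → ℝ → ℕ → ℝ := fun x y k =>
  if x = y then
    (if 2 ∣ k then poiP (k / 2) (FcirInv κ (rhoW W) W t x ^ 2 / (2 * rhoW W)) else 0)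
  else poiP k (FcirInv κ (rhoW W) W t x * FcirInv κ (rhoW W) W t y / rhoW W)

/-- The product measure on `ℝ^k` of `k` i.i.d. coordinates with density `f(t,·)`. -/
def cirPi (κ ρ : ℝ) (W : ℝ → ℝ → ℕ → ℝ) (t : ℝ) (k : ℕ) : Measure (Fin k → ℝ) :=
  volume.withDensity fun z => ∏ i : Fin k, ENNReal.ofReal (fCIRmix κ ρ W t (z i))

/-- Condition (E): uniform exponential moment bound for the initial multigraphs. -/
def CondE (B : (n : ℕ) → ℕ → ℕ → ℕ) : Prop :=
  ∃ lam : ℝ, 0 < lam ∧ ∃ C : ℝ, ∀ n : ℕ,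
    (∑ i ∈ Finset.range n, ∑ j ∈ (Finset.range n).filter (fun j => i < j),
        Real.exp (lam * (B n i j : ℝ))) ≤ C * (n.choose 2 : ℝ) ∧
    (∑ i ∈ Finset.range n, Real.exp (lam * (B n i i : ℝ))) ≤ C * (n : ℝ)

/-- Convergence `B_n → W` of a sequence of multigraphs to a multigraphon. -/
def GraphSeqConvTo (B : (n : ℕ) → ℕ → ℕ → ℕ) (W : ℝ → ℝ → ℕ → ℝ) : Prop :=
  ∀ (k : ℕ) (A : ℕ → ℕ → ℕ), IsAdjOn k A →
    Tendsto (fun n => tEqB k n A (B n)) atTop (𝓝 (tEqW k A W))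


/-- Generalized inverse of the `Gamma(κ, κ/ρ)` distribution function. -/
def FgammaInv (κ ρ : ℝ) (x : ℝ) : ℝ :=
  sInf {z : ℝ | x ≤ ∫ y in Ioc (0:ℝ) z, gamP y κ (κ / ρ)}

/-- The stationary multigraphon `Ŵ_∞`: Poisson fibres driven by `F⁻¹` with `F = Gamma(κ,κ/ρ)`. -/
def WhatInfER (κ ρ : ℝ) : ℝ → ℝ → ℕ → ℝ := fun x y k =>
  if x = y then
    (if 2 ∣ k then poiP (k / 2) (FgammaInv κ ρ x ^ 2 / (2 * ρ)) else 0)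
  else poiP k (FgammaInv κ ρ x * FgammaInv κ ρ y / ρ)

lemma poiP_nonneg {l : ℝ} (hl : 0 ≤ l) (k : ℕ) : 0 ≤ poiP k l := by
  unfold poiP; positivity

lemma poiP_le_one {l : ℝ} (hl : 0 ≤ l) (k : ℕ) : poiP k l ≤ 1 := by
  unfold poiP
  rw [mul_div_assoc]
  calc Real.exp (-l) * (l ^ k / (Nat.factorial k : ℝ)) ≤ Real.exp (-l) * Real.exp l := by
        exact mul_le_mul_of_nonneg_left (Real.pow_div_factorial_le_exp l hl k) (Real.exp_pos _).le
    _ = 1 := by rw [← Real.exp_add]; simp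

lemma poiP_continuous (k : ℕ) : Continuous (fun l => poiP k l) := by
  unfold poiP; fun_prop

lemma poiP_zero_left : poiP 0 0 = 1 := by simp [poiP]
lemma poiP_zero_of_ne {k : ℕ} (hk : k ≠ 0) : poiP k 0 = 0 := by
  simp [poiP, zero_pow hk]

lemma gamP_nonneg {y a b : ℝ} (ha : 0 ≤ a) (hb : 0 ≤ b) : 0 ≤ gamP y a b := by
  unfold gamP
  split
  · have := Real.Gamma_nonneg_of_nonneg ha
    rename_i hy
    have h1 : (0:ℝ) ≤ y ^ (a - 1) := Real.rpow_nonneg hy.le _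
    have h2 : (0:ℝ) ≤ b ^ a := Real.rpow_nonneg hb _
    have h3 : (0:ℝ) < Real.exp (-(b*y)) := Real.exp_pos _
    positivity
  · exact le_refl 0

lemma gamP_pos {y a b : ℝ} (hy : 0 < y) (ha : 0 < a) (hb : 0 < b) : 0 < gamP y a b := by
  unfold gamP
  rw [if_pos hy]
  have := Real.Gamma_pos_of_pos ha
  positivity

lemma gamP_le_bound {κ M b0 : ℝ} (hκ : 0 < κ) (hb0 : 0 < b0) {y b : ℝ}
    (hy : y ∈ Set.Ioc (0:ℝ) M) (hb : b ∈ Set.Ioc (0:ℝ) b0) (i : ℕ) :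
    gamP y (κ + i) b ≤ y ^ (κ - 1) * b0 ^ κ * ((M * b0) ^ i / Real.Gamma (κ + i)) := by
  have hy0 := hy.1
  have hyM := hy.2
  have hM : 0 < M := lt_of_lt_of_le hy0 hyM
  have hG : 0 < Real.Gamma (κ + i) := Real.Gamma_pos_of_pos (by positivity)
  unfold gamP
  rw [if_pos hy0]
  have h1 : y ^ (κ + i - 1) = y ^ (κ - 1) * y ^ i := by
    rw [← Real.rpow_natCast y i, ← Real.rpow_add hy0]; ring_nf
  have h2 : b ^ (κ + (i:ℝ)) ≤ b0 ^ κ * b0 ^ i := by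
    rw [← Real.rpow_natCast b0 i, ← Real.rpow_add hb0]
    exact Real.rpow_le_rpow hb.1.le hb.2 (by positivity)
  have h3 : Real.exp (-(b * y)) ≤ 1 := by
    rw [Real.exp_le_one_iff]; nlinarith [hb.1, hy0]
  calc y ^ (κ + ↑i - 1) * (b ^ (κ + ↑i) * Real.exp (-(b * y)) / Real.Gamma (κ + ↑i))
      ≤ y ^ (κ + ↑i - 1) * (b ^ (κ + ↑i) * 1 / Real.Gamma (κ + ↑i)) := by
        have hb1 : (0:ℝ) ≤ b ^ (κ + (i:ℝ)) := Real.rpow_nonneg hb.1.le _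
        have hy1 : (0:ℝ) ≤ y ^ (κ + (i:ℝ) - 1) := Real.rpow_nonneg hy0.le _
        apply mul_le_mul_of_nonneg_left _ hy1
        exact div_le_div_of_nonneg_right (by nlinarith) hG.le
    _ ≤ y ^ (κ - 1) * b0 ^ κ * ((M * b0) ^ i / Real.Gamma (κ + ↑i)) := by
        rw [h1, mul_pow]
        have hyk : (0:ℝ) ≤ y ^ (κ - 1) := Real.rpow_nonneg hy0.le _
        have hyi : y ^ i ≤ M ^ i := pow_le_pow_left₀ hy0.le hyM i
        have hb0k : (0:ℝ) ≤ b0 ^ κ := Real.rpow_nonneg hb0.le _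
        rw [mul_one]
        calc y ^ (κ - 1) * y ^ i * (b ^ (κ + ↑i) / Real.Gamma (κ + ↑i))
            ≤ y ^ (κ - 1) * M ^ i * (b0 ^ κ * b0 ^ i / Real.Gamma (κ + ↑i)) := by
              apply mul_le_mul
              · exact mul_le_mul_of_nonneg_left hyi hyk
              · exact div_le_div_of_nonneg_right h2 hG.le
              · have : (0:ℝ) ≤ b ^ (κ + (i:ℝ)) := Real.rpow_nonneg hb.1.le _
                positivity
              · positivity
          _ = y ^ (κ - 1) * b0 ^ κ * (M ^ i * b0 ^ i / Real.Gamma (κ + ↑i)) := by ring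

lemma summable_pow_div_gamma {κ : ℝ} (hκ : 0 < κ) {c : ℝ} (hc : 0 ≤ c) :
    Summable (fun i : ℕ => c ^ i / Real.Gamma (κ + i)) := by
  apply summable_of_ratio_norm_eventually_le (r := 1/2) (by norm_num)
  filter_upwards [eventually_ge_atTop (Nat.ceil (2 * c))] with i hi
  have hG : 0 < Real.Gamma (κ + i) := Real.Gamma_pos_of_pos (by positivity)
  have hki : κ + (i:ℝ) ≠ 0 := by positivity
  have hGs : Real.Gamma (κ + (i+1:ℕ)) = (κ + i) * Real.Gamma (κ + i) := by
    push_cast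
    rw [show κ + ((i:ℝ) + 1) = (κ + i) + 1 by ring, Real.Gamma_add_one hki]
  rw [hGs]
  have h2c : 2 * c ≤ κ + i := by
    have := Nat.ceil_le.mp (le_refl (Nat.ceil (2*c)))
    have h1 : (2*c : ℝ) ≤ (Nat.ceil (2*c) : ℝ) := Nat.le_ceil _
    have h2 : ((Nat.ceil (2*c) : ℕ) : ℝ) ≤ (i : ℝ) := by exact_mod_cast hi
    linarith [hκ]
  have hnum : ‖c ^ (i+1)‖ = c * ‖c ^ i‖ := by
    rw [Real.norm_eq_abs, Real.norm_eq_abs, abs_of_nonneg (pow_nonneg hc _),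
      abs_of_nonneg (pow_nonneg hc _), pow_succ]; ring
  rw [Real.norm_eq_abs, Real.norm_eq_abs, abs_div, abs_div,
    abs_of_pos (by positivity : (0:ℝ) < (κ+i) * Real.Gamma (κ+i)), abs_of_pos hG]
  rw [div_le_iff₀ (by positivity), abs_of_nonneg (pow_nonneg hc _),
    abs_of_nonneg (pow_nonneg hc _)]
  have hc2 : c * c ^ i ≤ ((κ + i) / 2) * c ^ i := by
    apply mul_le_mul_of_nonneg_right _ (pow_nonneg hc _)
    linarith
  calc c ^ (i+1) = c * c ^ i := by rw [pow_succ]; ring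
    _ ≤ ((κ + i)/2) * c ^ i := hc2
    _ = 1/2 * (c ^ i / Real.Gamma (κ + i)) * ((κ + i) * Real.Gamma (κ + i)) := by
        field_simp

lemma measurable_tsum_nonneg {β : Type*} [MeasurableSpace β] {f : ℕ → β → ℝ}
    (hf : ∀ i, Measurable (f i)) (h0 : ∀ i x, 0 ≤ f i x) :
    Measurable (fun x => ∑' i, f i x) := by
  have key : ∀ x, (∑' i, f i x) = (∑' i, ENNReal.ofReal (f i x)).toReal := by
    intro x
    by_cases hs : Summable (fun i => f i x)
    · rw [← ENNReal.ofReal_tsum_of_nonneg (fun i => h0 i x) hs, ENNReal.toReal_ofReal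
        (tsum_nonneg (fun i => h0 i x))]
    · rw [tsum_eq_zero_of_not_summable hs]
      by_cases htop : (∑' i, ENNReal.ofReal (f i x)) = ⊤
      · rw [htop]; simp
      · exfalso
        apply hs
        have := ENNReal.summable_toReal htop
        refine this.congr (fun i => ?_)
        rw [ENNReal.toReal_ofReal (h0 i x)]
  simp_rw [key]
  apply Measurable.ennreal_toReal
  exact Measurable.ennreal_tsum (fun i => (hf i).ennreal_ofReal)

lemma tauCIR_pos {a t : ℝ} (ha : 0 < a) (ht : 0 < t) : 0 < tauCIR a t := by
  unfold tauCIR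
  apply div_pos ha
  have : (1:ℝ) < Real.exp (a * t) := by
    rw [show (1:ℝ) = Real.exp 0 by simp]
    exact Real.exp_lt_exp.mpr (by positivity)
  linarith

lemma tauCIR_antitone {a s t : ℝ} (ha : 0 < a) (hs : 0 < s) (hst : s ≤ t) :
    tauCIR a t ≤ tauCIR a s := by
  unfold tauCIR
  have h1 : (1:ℝ) < Real.exp (a * s) := by
    rw [show (1:ℝ) = Real.exp 0 by simp]
    exact Real.exp_lt_exp.mpr (by positivity)
  apply div_le_div_of_nonneg_left ha.le (by linarith)
  have : Real.exp (a * s) ≤ Real.exp (a * t) := by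
    apply Real.exp_le_exp.mpr
    nlinarith
  linarith

lemma tauCIR_tendsto {a : ℝ} (ha : 0 < a) : Tendsto (fun t => tauCIR a t) atTop (𝓝 0) := by
  unfold tauCIR
  apply Tendsto.div_atTop (tendsto_const_nhds : Tendsto (fun _ => a) atTop (𝓝 a))
  apply tendsto_atTop_add_const_right
  exact Real.tendsto_exp_atTop.comp (Tendsto.const_mul_atTop ha tendsto_id)

lemma cirDens_nonneg {κ ρ t z : ℝ} (hκ : 0 < κ) (hρ : 0 < ρ) (ht : 0 < t) (hz : 0 ≤ z)
    (y : ℝ) : 0 ≤ cirDens κ ρ t z y := by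
  have hα : 0 < κ / ρ := by positivity
  have hτ : 0 < tauCIR (κ/ρ) t := tauCIR_pos hα ht
  apply tsum_nonneg
  intro i
  apply mul_nonneg (poiP_nonneg (by positivity) i)
  exact gamP_nonneg (by positivity) (by positivity)

lemma cirDens_le_bound {κ ρ : ℝ} (hκ : 0 < κ) (hρ : 0 < ρ) {M : ℝ} (hM : 0 < M)
    {t z y : ℝ} (ht : 1 ≤ t) (hz : 0 ≤ z) (hy : y ∈ Set.Ioc (0:ℝ) M) :
    cirDens κ ρ t z y ≤ y ^ (κ - 1) * (tauCIR (κ/ρ) 1 + κ/ρ) ^ κ *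
      ∑' i : ℕ, ((M * (tauCIR (κ/ρ) 1 + κ/ρ)) ^ i / Real.Gamma (κ + i)) := by
  have hα : 0 < κ / ρ := by positivity
  set b0 := tauCIR (κ/ρ) 1 + κ/ρ with hb0def
  have hb0 : 0 < b0 := by
    have := tauCIR_pos hα one_pos; positivity
  have hτ : 0 < tauCIR (κ/ρ) t := tauCIR_pos hα (by linarith)
  have hble : tauCIR (κ/ρ) t + κ/ρ ≤ b0 := by
    have := tauCIR_antitone hα one_pos ht; unfold b0; linarith
  have hbmem : tauCIR (κ/ρ) t + κ/ρ ∈ Set.Ioc (0:ℝ) b0 := ⟨by positivity, hble⟩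
  have hterm : ∀ i : ℕ, poiP i (z * tauCIR (κ/ρ) t) * gamP y (κ + i) (tauCIR (κ/ρ) t + κ/ρ)
      ≤ y ^ (κ - 1) * b0 ^ κ * ((M * b0) ^ i / Real.Gamma (κ + i)) := by
    intro i
    have h1 := poiP_le_one (by positivity : (0:ℝ) ≤ z * tauCIR (κ/ρ) t) i
    have h0 := poiP_nonneg (by positivity : (0:ℝ) ≤ z * tauCIR (κ/ρ) t) i
    have h2 := gamP_le_bound hκ hb0 hy hbmem i
    have h3 : 0 ≤ gamP y (κ + i) (tauCIR (κ/ρ) t + κ/ρ) :=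
      gamP_nonneg (by positivity) (by positivity)
    calc poiP i (z * tauCIR (κ/ρ) t) * gamP y (κ + i) (tauCIR (κ/ρ) t + κ/ρ)
        ≤ 1 * (y ^ (κ - 1) * b0 ^ κ * ((M * b0) ^ i / Real.Gamma (κ + i))) :=
          mul_le_mul h1 h2 h3 one_pos.le
      _ = y ^ (κ - 1) * b0 ^ κ * ((M * b0) ^ i / Real.Gamma (κ + i)) := one_mul _
  have hsum : Summable (fun i : ℕ => y ^ (κ - 1) * b0 ^ κ * ((M * b0) ^ i / Real.Gamma (κ + i))) :=
    (summable_pow_div_gamma hκ (by positivity)).mul_left _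
  have hsumf : Summable (fun i : ℕ =>
      poiP i (z * tauCIR (κ/ρ) t) * gamP y (κ + i) (tauCIR (κ/ρ) t + κ/ρ)) := by
    apply Summable.of_nonneg_of_le _ hterm hsum
    intro i
    exact mul_nonneg (poiP_nonneg (by positivity) i) (gamP_nonneg (by positivity) (by positivity))
  calc cirDens κ ρ t z y ≤ ∑' i : ℕ, y ^ (κ-1) * b0 ^ κ * ((M * b0) ^ i / Real.Gamma (κ + i)) :=
        Summable.tsum_le_tsum hterm hsumf hsum
    _ = y ^ (κ-1) * b0 ^ κ * ∑' i : ℕ, ((M * b0) ^ i / Real.Gamma (κ + i)) := tsum_mul_left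

lemma cirDens_tendsto {κ ρ : ℝ} (hκ : 0 < κ) (hρ : 0 < ρ) {z : ℝ} (hz : 0 ≤ z) (y : ℝ) :
    Tendsto (fun t => cirDens κ ρ t z y) atTop (𝓝 (gamP y κ (κ/ρ))) := by
  have hα : 0 < κ / ρ := by positivity
  by_cases hy : 0 < y
  swap
  · have hg : ∀ a b : ℝ, gamP y a b = 0 := by intro a b; simp [gamP, hy]
    have : ∀ t, cirDens κ ρ t z y = 0 := by
      intro t; unfold cirDens; simp [hg]
    simp_rw [this, hg]
    exact tendsto_const_nhds
  set b0 := tauCIR (κ/ρ) 1 + κ/ρ with hb0def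
  have hb0 : 0 < b0 := by have := tauCIR_pos hα one_pos; positivity
  have hτtend : Tendsto (fun t => tauCIR (κ/ρ) t) atTop (𝓝 0) := tauCIR_tendsto hα
  have key : Tendsto (fun t => ∑' i : ℕ,
      poiP i (z * tauCIR (κ/ρ) t) * gamP y (κ + i) (tauCIR (κ/ρ) t + κ/ρ)) atTop
      (𝓝 (∑' i : ℕ, poiP i 0 * gamP y (κ + i) (κ/ρ))) := by
    apply tendsto_tsum_of_dominated_convergence
      (bound := fun i : ℕ => y ^ (κ-1) * b0 ^ κ * ((y * b0) ^ i / Real.Gamma (κ + i)))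
    · exact (summable_pow_div_gamma hκ (by positivity)).mul_left _
    · intro i
      have h1 : Tendsto (fun t => poiP i (z * tauCIR (κ/ρ) t)) atTop (𝓝 (poiP i 0)) := by
        have := (poiP_continuous i).tendsto 0
        apply this.comp
        simpa using hτtend.const_mul z
      have h2 : Tendsto (fun t => gamP y (κ + i) (tauCIR (κ/ρ) t + κ/ρ)) atTop
          (𝓝 (gamP y (κ + i) (κ/ρ))) := by
        have hcont : ContinuousAt (fun b : ℝ => gamP y (κ + i) b) (κ/ρ) := by
          simp only [gamP, if_pos hy]
          apply ContinuousAt.mul continuousAt_const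
          apply ContinuousAt.div _ continuousAt_const (ne_of_gt (Real.Gamma_pos_of_pos (by positivity)))
          apply ContinuousAt.mul
          · exact Real.continuousAt_rpow_const _ _ (Or.inl (ne_of_gt hα))
          · exact (Real.continuous_exp.comp (by fun_prop)).continuousAt
        apply hcont.tendsto.comp
        have : Tendsto (fun t => tauCIR (κ/ρ) t + κ/ρ) atTop (𝓝 (0 + κ/ρ)) :=
          hτtend.add tendsto_const_nhds
        simpa using this
      exact h1.mul h2
    · filter_upwards [eventually_ge_atTop (1:ℝ)] with t ht
      intro i
      have hτ : 0 < tauCIR (κ/ρ) t := tauCIR_pos hα (by linarith)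
      have hble : tauCIR (κ/ρ) t + κ/ρ ≤ b0 := by
        have := tauCIR_antitone hα one_pos ht; unfold b0; linarith
      have h1 := poiP_le_one (by positivity : (0:ℝ) ≤ z * tauCIR (κ/ρ) t) i
      have h0 := poiP_nonneg (by positivity : (0:ℝ) ≤ z * tauCIR (κ/ρ) t) i
      have h2 := gamP_le_bound hκ hb0 (show y ∈ Set.Ioc (0:ℝ) y from ⟨hy, le_refl y⟩)
        (show tauCIR (κ/ρ) t + κ/ρ ∈ Set.Ioc (0:ℝ) b0 from ⟨by positivity, hble⟩) i
      have h3 : 0 ≤ gamP y (κ + i) (tauCIR (κ/ρ) t + κ/ρ) :=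
        gamP_nonneg (by positivity) (by positivity)
      rw [Real.norm_eq_abs, abs_of_nonneg (mul_nonneg h0 h3)]
      calc poiP i (z * tauCIR (κ/ρ) t) * gamP y (κ + i) (tauCIR (κ/ρ) t + κ/ρ)
          ≤ 1 * (y ^ (κ-1) * b0 ^ κ * ((y * b0) ^ i / Real.Gamma (κ + i))) :=
            mul_le_mul h1 h2 h3 one_pos.le
        _ = y ^ (κ-1) * b0 ^ κ * ((y * b0) ^ i / Real.Gamma (κ + i)) := one_mul _
  have hlim : (∑' i : ℕ, poiP i 0 * gamP y (κ + i) (κ/ρ)) = gamP y κ (κ/ρ) := by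
    rw [tsum_eq_single 0]
    · simp [poiP_zero_left]
    · intro i hi
      rw [poiP_zero_of_ne hi, zero_mul]
  rw [← hlim]
  exact key

section Wfacts
variable {W : ℝ → ℝ → ℕ → ℝ}

lemma degW_measurable (hW : IsMultigraphon W) : Measurable (degW W) := by
  have hF : Measurable (fun p : ℝ × ℝ => ∑' k : ℕ, (k : ℝ) * W p.1 p.2 k) := by
    apply measurable_tsum_nonneg
    · intro k
      have : Measurable (fun p : ℝ × ℝ => W p.1 p.2 k) := by
        have := hW.1
        exact this.comp (by fun_prop : Measurable (fun p : ℝ × ℝ => (p.1, p.2, k)))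
      exact this.const_mul _
    · intro k p
      exact mul_nonneg (Nat.cast_nonneg k) (hW.2.1 p.1 p.2 k).1
  have := (hF.stronglyMeasurable).integral_prod_right'
    (ν := volume.restrict (Icc (0:ℝ) 1))
  exact this.measurable

lemma degW_nonneg (hW : IsMultigraphon W) (x : ℝ) : 0 ≤ degW W x := by
  apply integral_nonneg
  intro y
  exact tsum_nonneg (fun k => mul_nonneg (Nat.cast_nonneg k) (hW.2.1 x y k).1)

lemma F0meas_univ (hW : IsMultigraphon W) : F0meas W Set.univ = 1 := by
  unfold F0meas
  rw [Measure.map_apply (degW_measurable hW) MeasurableSet.univ]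
  simp [Real.volume_Icc]

lemma F0meas_ae_nonneg (hW : IsMultigraphon W) : ∀ᵐ z ∂(F0meas W), 0 ≤ z := by
  rw [ae_iff]
  unfold F0meas
  rw [Measure.map_apply (degW_measurable hW) (by simp only [not_le]; exact measurableSet_Iio)]
  have : (degW W) ⁻¹' {z | ¬ 0 ≤ z} = ∅ := by
    ext x; simp [degW_nonneg hW x]
  rw [this]
  simp

end Wfacts

def cirBound (κ ρ M y : ℝ) : ℝ :=
  y ^ (κ-1) * ((tauCIR (κ/ρ) 1 + κ/ρ) ^ κ *
    ∑' i : ℕ, ((M * (tauCIR (κ/ρ) 1 + κ/ρ)) ^ i / Real.Gamma (κ + i)))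

lemma cirDens_le_cirBound {κ ρ : ℝ} (hκ : 0 < κ) (hρ : 0 < ρ) {M : ℝ} (hM : 0 < M)
    {t z y : ℝ} (ht : 1 ≤ t) (hz : 0 ≤ z) (hy : y ∈ Set.Ioc (0:ℝ) M) :
    cirDens κ ρ t z y ≤ cirBound κ ρ M y := by
  have := cirDens_le_bound hκ hρ hM ht hz hy
  unfold cirBound
  rw [← mul_assoc]
  exact this

lemma integrableOn_cirBound {κ ρ : ℝ} (hκ : 0 < κ) (hρ : 0 < ρ) (M x : ℝ) :
    IntegrableOn (fun y => cirBound κ ρ M y) (Set.Ioc (0:ℝ) x) := by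
  unfold cirBound
  apply Integrable.mul_const
  rcases le_or_gt x 0 with hx | hx
  · rw [Set.Ioc_eq_empty (by linarith)]
    simp [IntegrableOn]
  · have h1 : IntervalIntegrable (fun y : ℝ => y ^ (κ-1)) volume 0 x :=
      intervalIntegral.intervalIntegrable_rpow' (by linarith)
    rw [intervalIntegrable_iff_integrableOn_Ioc_of_le hx.le] at h1
    exact h1

lemma aesm_cirDens {κ ρ : ℝ} (hκ : 0 < κ) (hρ : 0 < ρ) (hW : IsMultigraphon W)
    {t : ℝ} (ht : 1 ≤ t) (y : ℝ) :
    AEStronglyMeasurable (fun z => cirDens κ ρ t z y) (F0meas W) := by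
  have hα : 0 < κ / ρ := by positivity
  have hτ : 0 < tauCIR (κ/ρ) t := tauCIR_pos hα (by linarith)
  by_cases hy : 0 < y
  swap
  · have : (fun z => cirDens κ ρ t z y) = fun _ => 0 := by
      funext z
      unfold cirDens
      have hg : ∀ a b : ℝ, gamP y a b = 0 := by intro a b; simp [gamP, hy]
      simp [hg]
    rw [this]; exact aestronglyMeasurable_const
  set b0 := tauCIR (κ/ρ) 1 + κ/ρ with hb0def
  have hb0 : 0 < b0 := by have := tauCIR_pos hα one_pos; positivity
  have hble : tauCIR (κ/ρ) t + κ/ρ ≤ b0 := by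
    have := tauCIR_antitone hα one_pos ht; unfold b0; linarith
  have hcont : Continuous (fun z => cirDens κ ρ t (max z 0) y) := by
    unfold cirDens
    apply continuous_tsum
      (u := fun i : ℕ => y ^ (κ-1) * b0 ^ κ * ((y * b0) ^ i / Real.Gamma (κ + i)))
    · intro i
      apply Continuous.mul _ continuous_const
      exact (poiP_continuous i).comp (by fun_prop)
    · exact (summable_pow_div_gamma hκ (by positivity)).mul_left _
    · intro i z
      have hz0 : (0:ℝ) ≤ max z 0 := le_max_right z 0
      have h1 := poiP_le_one (by positivity : (0:ℝ) ≤ max z 0 * tauCIR (κ/ρ) t) i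
      have h0 := poiP_nonneg (by positivity : (0:ℝ) ≤ max z 0 * tauCIR (κ/ρ) t) i
      have h2 := gamP_le_bound hκ hb0 (show y ∈ Set.Ioc (0:ℝ) y from ⟨hy, le_refl y⟩)
        (show tauCIR (κ/ρ) t + κ/ρ ∈ Set.Ioc (0:ℝ) b0 from ⟨by positivity, hble⟩) i
      have h3 : 0 ≤ gamP y (κ + i) (tauCIR (κ/ρ) t + κ/ρ) :=
        gamP_nonneg (by positivity) (by positivity)
      rw [Real.norm_eq_abs, abs_of_nonneg (mul_nonneg h0 h3)]
      calc poiP i (max z 0 * tauCIR (κ/ρ) t) * gamP y (κ + i) (tauCIR (κ/ρ) t + κ/ρ)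
          ≤ 1 * (y ^ (κ-1) * b0 ^ κ * ((y * b0) ^ i / Real.Gamma (κ + i))) :=
            mul_le_mul h1 h2 h3 one_pos.le
        _ = y ^ (κ-1) * b0 ^ κ * ((y * b0) ^ i / Real.Gamma (κ + i)) := one_mul _
  apply (hcont.measurable.stronglyMeasurable.aestronglyMeasurable).congr
  filter_upwards [F0meas_ae_nonneg hW] with z hz
  rw [max_eq_left hz]

lemma isFiniteF0 (hW : IsMultigraphon W) : IsFiniteMeasure (F0meas W) :=
  ⟨by rw [F0meas_univ hW]; exact ENNReal.one_lt_top⟩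

lemma integrable_cirDens {κ ρ : ℝ} (hκ : 0 < κ) (hρ : 0 < ρ) (hW : IsMultigraphon W)
    {M : ℝ} (hM : 0 < M) {t y : ℝ} (ht : 1 ≤ t) (hy : y ∈ Set.Ioc (0:ℝ) M) :
    Integrable (fun z => cirDens κ ρ t z y) (F0meas W) := by
  haveI := isFiniteF0 hW
  apply Integrable.mono' (integrable_const (cirBound κ ρ M y)) (aesm_cirDens hκ hρ hW ht y)
  filter_upwards [F0meas_ae_nonneg hW] with z hz
  rw [Real.norm_eq_abs, abs_of_nonneg (cirDens_nonneg hκ hρ (by linarith) hz y)]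
  exact cirDens_le_cirBound hκ hρ hM ht hz hy

lemma fCIRmix_nonneg {κ ρ : ℝ} (hκ : 0 < κ) (hρ : 0 < ρ) (hW : IsMultigraphon W)
    {t : ℝ} (ht : 1 ≤ t) (y : ℝ) : 0 ≤ fCIRmix κ ρ W t y := by
  apply integral_nonneg_of_ae
  filter_upwards [F0meas_ae_nonneg hW] with z hz
  exact cirDens_nonneg hκ hρ (by linarith) hz y

lemma fCIRmix_le_bound {κ ρ : ℝ} (hκ : 0 < κ) (hρ : 0 < ρ) (hW : IsMultigraphon W)
    {M : ℝ} (hM : 0 < M) {t y : ℝ} (ht : 1 ≤ t) (hy : y ∈ Set.Ioc (0:ℝ) M) :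
    fCIRmix κ ρ W t y ≤ cirBound κ ρ M y := by
  haveI := isFiniteF0 hW
  unfold fCIRmix
  calc ∫ z, cirDens κ ρ t z y ∂(F0meas W) ≤ ∫ _, cirBound κ ρ M y ∂(F0meas W) := by
        apply integral_mono_ae (integrable_cirDens hκ hρ hW hM ht hy) (integrable_const _)
        filter_upwards [F0meas_ae_nonneg hW] with z hz
        exact cirDens_le_cirBound hκ hρ hM ht hz hy
    _ = cirBound κ ρ M y := by
        rw [integral_const, measureReal_def, F0meas_univ hW]
        simp

lemma fCIRmix_tendsto {κ ρ : ℝ} (hκ : 0 < κ) (hρ : 0 < ρ) (hW : IsMultigraphon W)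
    {y : ℝ} (hy : 0 < y) :
    Tendsto (fun t => fCIRmix κ ρ W t y) atTop (𝓝 (gamP y κ (κ/ρ))) := by
  haveI := isFiniteF0 hW
  have key : Tendsto (fun t => fCIRmix κ ρ W t y) atTop
      (𝓝 (∫ _, gamP y κ (κ/ρ) ∂(F0meas W))) := by
    apply tendsto_integral_filter_of_dominated_convergence (bound := fun _ => cirBound κ ρ y y)
    · filter_upwards [eventually_ge_atTop (1:ℝ)] with t ht
      exact aesm_cirDens hκ hρ hW ht y
    · filter_upwards [eventually_ge_atTop (1:ℝ)] with t ht
      filter_upwards [F0meas_ae_nonneg hW] with z hz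
      rw [Real.norm_eq_abs, abs_of_nonneg (cirDens_nonneg hκ hρ (by linarith) hz y)]
      exact cirDens_le_cirBound hκ hρ hy ht hz ⟨hy, le_refl y⟩
    · exact integrable_const _
    · filter_upwards [F0meas_ae_nonneg hW] with z hz
      exact cirDens_tendsto hκ hρ hz y
  rw [integral_const, measureReal_def, F0meas_univ hW] at key
  simpa using key

lemma fCIRmix_measurable {κ ρ : ℝ} (hκ : 0 < κ) (hρ : 0 < ρ) (hW : IsMultigraphon W)
    {t : ℝ} (ht : 1 ≤ t) : Measurable (fCIRmix κ ρ W t) := by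
  haveI := isFiniteF0 hW
  have hα : 0 < κ / ρ := by positivity
  have hτ : 0 < tauCIR (κ/ρ) t := tauCIR_pos hα (by linarith)
  set G : ℝ × ℝ → ℝ := fun p => ∑' i : ℕ,
    poiP i (max p.2 0 * tauCIR (κ/ρ) t) * gamP p.1 ((κ:ℝ) + i) (tauCIR (κ/ρ) t + κ/ρ)
    with hGdef
  have hGmeas : Measurable G := by
    apply measurable_tsum_nonneg
    · intro i
      apply Measurable.mul
      · exact (poiP_continuous i).measurable.comp (by fun_prop)
      · have : Measurable (fun x : ℝ => gamP x ((κ:ℝ)+i) (tauCIR (κ/ρ) t + κ/ρ)) := by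
          unfold gamP
          apply Measurable.ite measurableSet_Ioi _ measurable_const
          apply Measurable.mul (by measurability : Measurable (fun x : ℝ => x ^ ((κ:ℝ)+i-1)))
          have : Continuous (fun a : ℝ => (tauCIR (κ/ρ) t + κ/ρ) ^ (κ + (i:ℝ)) *
              Real.exp (-((tauCIR (κ/ρ) t + κ/ρ) * a)) / Real.Gamma (κ + (i:ℝ))) := by
            fun_prop
          exact this.measurable
        exact this.comp measurable_fst
    · intro i p
      exact mul_nonneg (poiP_nonneg (by positivity) i)
        (gamP_nonneg (by positivity) (by positivity))
  have hint : Measurable (fun y => ∫ z, G (y, z) ∂(F0meas W)) :=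
    (hGmeas.stronglyMeasurable.integral_prod_right').measurable
  have : fCIRmix κ ρ W t = fun y => ∫ z, G (y, z) ∂(F0meas W) := by
    funext y
    unfold fCIRmix
    apply integral_congr_ae
    filter_upwards [F0meas_ae_nonneg hW] with z hz
    unfold cirDens
    rw [hGdef]
    simp only [max_eq_left hz]
  rw [this]
  exact hint

section GammaSide
open ProbabilityTheory

lemma gamP_eq_gammaPDFReal {a b y : ℝ} (hy : 0 < y) :
    gamP y a b = gammaPDFReal a b y := by
  unfold gamP gammaPDFReal
  rw [if_pos hy, if_pos hy.le]
  ring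

lemma gamP_measurable (a b : ℝ) : Measurable (fun y => gamP y a b) := by
  unfold gamP
  apply Measurable.ite measurableSet_Ioi _ measurable_const
  apply Measurable.mul (by measurability : Measurable (fun x : ℝ => x ^ (a-1)))
  have : Continuous (fun x : ℝ => b ^ a * Real.exp (-(b * x)) / Real.Gamma a) := by fun_prop
  exact this.measurable

lemma integrable_gammaPDFReal {a r : ℝ} (ha : 0 < a) (hr : 0 < r) :
    Integrable (gammaPDFReal a r) := by
  constructor
  · exact (measurable_gammaPDFReal a r).aestronglyMeasurable
  · rw [hasFiniteIntegral_iff_ofReal (ae_of_all _ (gammaPDFReal_nonneg ha hr))]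
    have : ∫⁻ x, ENNReal.ofReal (gammaPDFReal a r x) = 1 := lintegral_gammaPDF_eq_one ha hr
    rw [this]
    exact ENNReal.one_lt_top

lemma integrableOn_gamP_Ioi {κ b : ℝ} (hκ : 0 < κ) (hb : 0 < b) :
    IntegrableOn (fun y => gamP y κ b) (Ioi (0:ℝ)) := by
  apply IntegrableOn.congr_fun ((integrable_gammaPDFReal hκ hb).integrableOn)
  · intro y hy
    exact (gamP_eq_gammaPDFReal hy).symm
  · exact measurableSet_Ioi

lemma integral_gamP_Ioi {κ b : ℝ} (hκ : 0 < κ) (hb : 0 < b) :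
    ∫ y in Ioi (0:ℝ), gamP y κ b = 1 := by
  have h1 : ∫ y in Ioi (0:ℝ), gamP y κ b = ∫ y in Ioi (0:ℝ), gammaPDFReal κ b y :=
    setIntegral_congr_fun measurableSet_Ioi (fun y hy => gamP_eq_gammaPDFReal hy)
  rw [h1]
  have h2 : ∫ y in Ioi (0:ℝ), gammaPDFReal κ b y = ∫ y, gammaPDFReal κ b y := by
    apply setIntegral_eq_integral_of_ae_compl_eq_zero
    have : ∀ᵐ y : ℝ, y ≠ 0 := by
      rw [ae_iff]
      simpa using volume_singleton (a := (0:ℝ))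
    filter_upwards [this] with y hy0 hy
    simp only [mem_Ioi, not_lt] at hy
    unfold gammaPDFReal
    rw [if_neg]
    intro h
    exact hy0 (le_antisymm hy h)
  rw [h2]
  have h3 := lintegral_gammaPDF_eq_one hκ hb
  rw [integral_eq_lintegral_of_nonneg_ae (ae_of_all _ (gammaPDFReal_nonneg hκ hb))
    (measurable_gammaPDFReal κ b).aestronglyMeasurable]
  unfold gammaPDF at h3
  rw [h3]
  simp

lemma integrableOn_gamP_Ioc {κ b : ℝ} (hκ : 0 < κ) (hb : 0 < b) (z : ℝ) :
    IntegrableOn (fun y => gamP y κ b) (Ioc (0:ℝ) z) :=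
  (integrableOn_gamP_Ioi hκ hb).mono_set Ioc_subset_Ioi_self

lemma Fg_mono {κ b : ℝ} (hκ : 0 < κ) (hb : 0 < b) :
    Monotone (fun z => ∫ y in Ioc (0:ℝ) z, gamP y κ b) := by
  intro z1 z2 h
  apply setIntegral_mono_set (integrableOn_gamP_Ioc hκ hb z2)
  · filter_upwards with y using gamP_nonneg hκ.le hb.le
  · exact HasSubset.Subset.eventuallyLE (Ioc_subset_Ioc_right h)

lemma Fg_nonpos {κ b : ℝ} {z : ℝ} (hz : z ≤ 0) : (∫ y in Ioc (0:ℝ) z, gamP y κ b) = 0 := by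
  rw [Set.Ioc_eq_empty (by linarith), Measure.restrict_empty, integral_zero_measure]

lemma Fg_strict {κ b : ℝ} (hκ : 0 < κ) (hb : 0 < b) {z1 z2 : ℝ} (h0 : 0 ≤ z1) (h : z1 < z2) :
    (∫ y in Ioc (0:ℝ) z1, gamP y κ b) < ∫ y in Ioc (0:ℝ) z2, gamP y κ b := by
  have hsplit : (∫ y in Ioc (0:ℝ) z2, gamP y κ b) =
      (∫ y in Ioc (0:ℝ) z1, gamP y κ b) + ∫ y in Ioc z1 z2, gamP y κ b := by
    rw [← setIntegral_union (Set.Ioc_disjoint_Ioc_of_le le_rfl) measurableSet_Ioc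
      (integrableOn_gamP_Ioc hκ hb z1) ((integrableOn_gamP_Ioi hκ hb).mono_set
        (fun y hy => lt_of_le_of_lt h0 hy.1))]
    rw [Set.Ioc_union_Ioc_eq_Ioc (le_trans h0 (le_refl z1)) h.le]
  rw [hsplit, lt_add_iff_pos_right]
  rw [setIntegral_pos_iff_support_of_nonneg_ae]
  · have hsub : Ioc z1 z2 ⊆ Function.support (fun y => gamP y κ b) ∩ Ioc z1 z2 := by
      intro y hy
      refine ⟨?_, hy⟩
      simp only [Function.mem_support]
      exact ne_of_gt (gamP_pos (lt_of_le_of_lt h0 hy.1) hκ hb)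
    calc (0:ℝ≥0∞) < volume (Ioc z1 z2) := by
          rw [Real.volume_Ioc]; simp [h]
      _ ≤ volume (Function.support (fun y => gamP y κ b) ∩ Ioc z1 z2) := by
          apply measure_mono hsub |>.trans_eq
          rfl
  · filter_upwards with y using gamP_nonneg hκ.le hb.le
  · exact (integrableOn_gamP_Ioi hκ hb).mono_set (fun y hy => lt_of_le_of_lt h0 hy.1)

lemma Fg_tendsto_one {κ b : ℝ} (hκ : 0 < κ) (hb : 0 < b) :
    Tendsto (fun n : ℕ => ∫ y in Ioc (0:ℝ) n, gamP y κ b) atTop (𝓝 1) := by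
  have hU : (⋃ n : ℕ, Ioc (0:ℝ) n) = Ioi 0 := by
    ext y
    simp only [mem_iUnion, mem_Ioc, mem_Ioi]
    constructor
    · rintro ⟨n, hn, _⟩; exact hn
    · intro hy
      obtain ⟨n, hn⟩ := exists_nat_ge y
      exact ⟨n, hy, hn⟩
  have := tendsto_setIntegral_of_monotone (f := fun y => gamP y κ b) (μ := volume)
    (s := fun n : ℕ => Ioc (0:ℝ) n) (fun n => measurableSet_Ioc)
    (fun m n h => Ioc_subset_Ioc_right (by exact_mod_cast h))
    (by rw [hU]; exact integrableOn_gamP_Ioi hκ hb)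
  rw [hU, integral_gamP_Ioi hκ hb] at this
  exact this
end GammaSide

section FcirSide
variable {W : ℝ → ℝ → ℕ → ℝ} {κ ρ : ℝ}

lemma integrableOn_fCIRmix (hκ : 0 < κ) (hρ : 0 < ρ) (hW : IsMultigraphon W)
    {t : ℝ} (ht : 1 ≤ t) (x : ℝ) :
    IntegrableOn (fCIRmix κ ρ W t) (Ioc (0:ℝ) x) := by
  rcases le_or_gt x 0 with hx | hx
  · rw [Set.Ioc_eq_empty (by linarith)]
    simp [IntegrableOn]
  apply Integrable.mono' (integrableOn_cirBound hκ hρ x x)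
    ((fCIRmix_measurable hκ hρ hW ht).aestronglyMeasurable.restrict)
  rw [ae_restrict_iff' measurableSet_Ioc]
  filter_upwards with y hy
  rw [Real.norm_eq_abs, abs_of_nonneg (fCIRmix_nonneg hκ hρ hW ht y)]
  exact fCIRmix_le_bound hκ hρ hW hx ht hy

lemma Fcir_nonpos {t z : ℝ} (hz : z ≤ 0) : Fcir κ ρ W t z = 0 := by
  unfold Fcir
  rw [Set.Ioc_eq_empty (by linarith), Measure.restrict_empty, integral_zero_measure]

lemma Fcir_mono (hκ : 0 < κ) (hρ : 0 < ρ) (hW : IsMultigraphon W) {t : ℝ} (ht : 1 ≤ t) :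
    Monotone (Fcir κ ρ W t) := by
  intro z1 z2 h
  unfold Fcir
  apply setIntegral_mono_set (integrableOn_fCIRmix hκ hρ hW ht z2)
  · filter_upwards with y using fCIRmix_nonneg hκ hρ hW ht y
  · exact HasSubset.Subset.eventuallyLE (Ioc_subset_Ioc_right h)

lemma Fcir_tendsto (hκ : 0 < κ) (hρ : 0 < ρ) (hW : IsMultigraphon W) (z : ℝ) :
    Tendsto (fun t => Fcir κ ρ W t z) atTop
      (𝓝 (∫ y in Ioc (0:ℝ) z, gamP y κ (κ/ρ))) := by
  rcases le_or_gt z 0 with hz | hz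
  · have h1 : ∀ t, Fcir κ ρ W t z = 0 := fun t => Fcir_nonpos hz
    rw [Fg_nonpos hz]
    simp_rw [h1]
    exact tendsto_const_nhds
  unfold Fcir
  apply tendsto_integral_filter_of_dominated_convergence (bound := cirBound κ ρ z)
  · filter_upwards [eventually_ge_atTop (1:ℝ)] with t ht
    exact (fCIRmix_measurable hκ hρ hW ht).aestronglyMeasurable.restrict
  · filter_upwards [eventually_ge_atTop (1:ℝ)] with t ht
    rw [ae_restrict_iff' measurableSet_Ioc]
    filter_upwards with y hy
    rw [Real.norm_eq_abs, abs_of_nonneg (fCIRmix_nonneg hκ hρ hW ht y)]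
    exact fCIRmix_le_bound hκ hρ hW hz ht hy
  · exact integrableOn_cirBound hκ hρ z z
  · rw [ae_restrict_iff' measurableSet_Ioc]
    filter_upwards with y hy
    exact fCIRmix_tendsto hκ hρ hW hy.1

end FcirSide

section InvConv
variable {W : ℝ → ℝ → ℕ → ℝ} {κ ρ : ℝ}

lemma FcirInv_nonneg (hκ : 0 < κ) (hρ : 0 < ρ) {u : ℝ} (hu : 0 < u) (t : ℝ) :
    0 ≤ FcirInv κ ρ W t u := by
  apply Real.sInf_nonneg
  intro z hz
  simp only [mem_setOf_eq] at hz
  by_contra h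
  push_neg at h
  rw [Fcir_nonpos (by linarith)] at hz
  linarith

lemma FgammaInv_nonneg (hκ : 0 < κ) (hρ : 0 < ρ) {u : ℝ} (hu : 0 < u) :
    0 ≤ FgammaInv κ ρ u := by
  apply Real.sInf_nonneg
  intro z hz
  simp only [mem_setOf_eq] at hz
  by_contra h
  push_neg at h
  rw [Fg_nonpos (by linarith)] at hz
  linarith

lemma FcirInv_tendsto (hκ : 0 < κ) (hρ : 0 < ρ) (hW : IsMultigraphon W)
    {u : ℝ} (hu0 : 0 < u) (hu1 : u < 1) :
    Tendsto (fun t => FcirInv κ ρ W t u) atTop (𝓝 (FgammaInv κ ρ u)) := by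
  have hb : 0 < κ / ρ := by positivity
  set Fg : ℝ → ℝ := fun z => ∫ y in Ioc (0:ℝ) z, gamP y κ (κ/ρ) with hFgdef
  set S : Set ℝ := {z | u ≤ Fg z} with hSdef
  set q : ℝ := FgammaInv κ ρ u with hqdef
  have hq_eq : q = sInf S := rfl
  have hSsub : S ⊆ Ioi 0 := by
    intro z hz
    simp only [hSdef, mem_setOf_eq] at hz
    by_contra h
    simp only [mem_Ioi, not_lt] at h
    have h0 : Fg z = 0 := Fg_nonpos h
    rw [h0] at hz
    linarith
  have hSbdd : BddBelow S := ⟨0, fun z hz => (hSsub hz).le⟩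
  have hSne : S.Nonempty := by
    have := (Fg_tendsto_one hκ hb).eventually (eventually_gt_nhds hu1)
    obtain ⟨n, hn⟩ := this.exists
    exact ⟨n, hn.le⟩
  have hq0 : 0 ≤ q := FgammaInv_nonneg hκ hρ hu0
  rw [Metric.tendsto_nhds]
  intro ε hε
  set ε' := ε / 2 with hε'def
  have hε' : 0 < ε' := by positivity
  -- choose z₀ ∈ S with z₀ < q + ε'
  obtain ⟨z₀, hz₀S, hz₀lt⟩ : ∃ z₀ ∈ S, z₀ < q + ε' := by
    obtain ⟨z₀, hz₀S, h⟩ := Real.lt_sInf_add_pos hSne hε'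
    exact ⟨z₀, hz₀S, by rw [hq_eq]; linarith⟩
  have hz₀pos : 0 < z₀ := hSsub hz₀S
  have hFgq : u < Fg (q + ε') := by
    calc u ≤ Fg z₀ := hz₀S
      _ < Fg (q + ε') := Fg_strict hκ hb hz₀pos.le hz₀lt
  have hupper : ∀ᶠ t in atTop, u < Fcir κ ρ W t (q + ε') :=
    (Fcir_tendsto hκ hρ hW (q + ε')).eventually (eventually_gt_nhds hFgq)
  have hlower : ∀ᶠ t in atTop, ∀ w ∈ {z | u ≤ Fcir κ ρ W t z}, q - ε' ≤ w := by
    rcases le_or_gt (q - ε') 0 with hqe | hqe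
    · filter_upwards with t
      intro w hw
      have hw' : u ≤ Fcir κ ρ W t w := hw
      by_contra h
      push_neg at h
      rw [Fcir_nonpos (by linarith)] at hw'
      linarith
    · have hqnotS : Fg (q - ε') < u := by
        have : (q - ε') ∉ S := notMem_of_lt_csInf (by rw [← hq_eq]; linarith) hSbdd
        simpa only [hSdef, mem_setOf_eq, not_le] using this
      have hev : ∀ᶠ t in atTop, Fcir κ ρ W t (q - ε') < u :=
        (Fcir_tendsto hκ hρ hW (q - ε')).eventually (eventually_lt_nhds hqnotS)
      filter_upwards [hev, eventually_ge_atTop (1:ℝ)] with t hlt ht1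
      intro w hw
      have hw' : u ≤ Fcir κ ρ W t w := hw
      by_contra h
      push_neg at h
      have := Fcir_mono hκ hρ hW ht1 h.le
      linarith
  filter_upwards [hupper, hlower] with t hup hlo
  have hStne : (q + ε') ∈ {z | u ≤ Fcir κ ρ W t z} := hup.le
  have h1 : FcirInv κ ρ W t u ≤ q + ε' := by
    apply csInf_le _ hStne
    refine ⟨0, fun z hz => ?_⟩
    simp only [mem_setOf_eq] at hz
    by_contra h
    push_neg at h
    rw [Fcir_nonpos (by linarith)] at hz
    linarith
  have h2 : q - ε' ≤ FcirInv κ ρ W t u := le_csInf ⟨_, hStne⟩ hlo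
  rw [Real.dist_eq, abs_lt]
  constructor <;> [linarith; linarith]

end InvConv

lemma measurable_geninv {g : ℝ → ℝ} (hg : Monotone g) :
    Measurable (fun x => sInf {z : ℝ | x ≤ g z}) := by
  set f : ℝ → ℝ := fun x => sInf {z : ℝ | x ≤ g z} with hfdef
  set U : Set ℝ := {x | ∀ z, x ≤ g z} with hUdef
  set N : Set ℝ := {x | ∀ z, ¬ x ≤ g z} with hNdef
  set V : Set ℝ := (U ∪ N)ᶜ with hVdef
  have hUlower : ∀ x x' : ℝ, x' ≤ x → x ∈ U → x' ∈ U := fun x x' h hx z => le_trans h (hx z)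
  have hNupper : ∀ x x' : ℝ, x ≤ x' → x ∈ N → x' ∈ N := by
    intro x x' h hx z hle
    exact hx z (le_trans h hle)
  have hfU : ∀ x ∈ U, f x = 0 := by
    intro x hx
    have : {z : ℝ | x ≤ g z} = univ := eq_univ_of_forall hx
    rw [hfdef]
    simp only [this]
    apply Real.sInf_of_not_bddBelow
    rintro ⟨w, hw⟩
    have := hw (mem_univ (w - 1))
    linarith
  have hfN : ∀ x ∈ N, f x = 0 := by
    intro x hx
    have : {z : ℝ | x ≤ g z} = ∅ := eq_empty_of_forall_notMem hx
    rw [hfdef]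
    simp only [this]
    exact Real.sInf_empty
  have hSupper : ∀ x : ℝ, ∀ z z' : ℝ, z ≤ z' → x ≤ g z → x ≤ g z' :=
    fun x z z' h hz => le_trans hz (hg h)
  have hmonoV : ∀ x ∈ V, ∀ x' ∈ V, x ≤ x' → f x ≤ f x' := by
    intro x hx x' hx' h
    rw [hVdef, mem_compl_iff] at hx hx'
    simp only [mem_union, not_or] at hx hx'
    have hne : {z : ℝ | x' ≤ g z}.Nonempty := by
      by_contra hempty
      apply hx'.2
      intro z hz
      have hee := not_nonempty_iff_eq_empty.mp hempty
      have : z ∈ {w : ℝ | x' ≤ g w} := hz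
      rw [hee] at this
      exact this
    have hbdd : BddBelow {z : ℝ | x ≤ g z} := by
      have : ∃ w, ¬ x ≤ g w := by
        by_contra hall
        push_neg at hall
        exact hx.1 hall
      obtain ⟨w, hw⟩ := this
      refine ⟨w, fun z hz => ?_⟩
      by_contra hlt
      push_neg at hlt
      exact hw (hSupper x z w hlt.le hz)
    apply csInf_le_csInf hbdd hne
    intro z hz
    exact le_trans h hz
  apply measurable_of_Iio
  intro c
  have hdecomp : f ⁻¹' Iio c =
      {x ∈ V | f x < c} ∪ (if 0 < c then Vᶜ else ∅) := by
    ext x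
    simp only [mem_preimage, mem_Iio, mem_union, mem_setOf_eq, mem_ite_empty_right]
    constructor
    · intro hx
      by_cases hv : x ∈ V
      · exact Or.inl ⟨hv, hx⟩
      · right
        refine ⟨?_, hv⟩
        have hUN : x ∈ U ∪ N := by
          have : ¬ x ∈ (U ∪ N)ᶜ := hv
          rwa [mem_compl_iff, not_not] at this
        have : f x = 0 := by
          rcases hUN with h | h
          · exact hfU x h
          · exact hfN x h
        rw [this] at hx
        exact hx
    · rintro (⟨_, hx⟩ | ⟨hc, hv⟩)
      · exact hx
      · have hUN : x ∈ U ∪ N := by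
          have : ¬ x ∈ (U ∪ N)ᶜ := hv
          rwa [mem_compl_iff, not_not] at this
        have : f x = 0 := by
          rcases hUN with h | h
          · exact hfU x h
          · exact hfN x h
        rw [this]
        exact hc
  rw [hdecomp]
  apply MeasurableSet.union
  · apply Set.OrdConnected.measurableSet
    constructor
    intro a ha b hb y hy
    have haV : a ∈ V := ha.1
    have hbV : b ∈ V := hb.1
    have haU : a ∉ U := fun h => haV (Or.inl h)
    have hbN : b ∉ N := fun h => hbV (Or.inr h)
    have hyV : y ∈ V := by
      intro hUN
      rcases hUN with h | h
      · exact haU (hUlower y a hy.1 h)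
      · exact hbN (hNupper y b hy.2 h)
    exact ⟨hyV, lt_of_le_of_lt (hmonoV y hyV b hb.1 hy.2) hb.2⟩
  · split
    · rw [hVdef, compl_compl]
      apply MeasurableSet.union
      · apply Set.OrdConnected.measurableSet
        exact ⟨fun a ha b hb y hy => hUlower b y hy.2 hb⟩
      · apply Set.OrdConnected.measurableSet
        exact ⟨fun a ha b hb y hy => hNupper a y hy.1 ha⟩
    · exact MeasurableSet.empty

/-- `lim_{t→∞} Ŵ_t ≅ Ŵ_∞`. -/
theorem What_limit_stationary
    (κ : ℝ) (hκ : 0 < κ)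
    (W : ℝ → ℝ → ℕ → ℝ) (hW : IsMultigraphon W)
    (hρpos : 0 < rhoW W) (hρfin : IntegrableOn (degW W) (Icc (0:ℝ) 1))
    (k : ℕ) (A : ℕ → ℕ → ℕ) (hA : IsAdjOn k A) :
    Tendsto (fun t : ℝ => tEqW k A (WhatER κ W t)) atTop
      (𝓝 (tEqW k A (WhatInfER κ (rhoW W)))) := by
  have hρ : 0 < rhoW W := hρpos
  set ρ : ℝ := rhoW W with hρdef
  unfold tEqW
  set S : Set (Fin k → ℝ) := Set.univ.pi (fun _ : Fin k => Icc (0:ℝ) 1) with hSdef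
  have hSmeas : MeasurableSet S := MeasurableSet.univ_pi (fun _ => measurableSet_Icc)
  have hae : ∀ᵐ x ∂(volume.restrict S : Measure (Fin k → ℝ)), ∀ i, x i ∈ Ioo (0:ℝ) 1 := by
    have h0 : ∀ (i : Fin k) (c : ℝ), (volume : Measure (Fin k → ℝ)) {x | x i = c} = 0 := by
      intro i c
      rw [volume_pi]
      exact Measure.pi_hyperplane (fun _ : Fin k => (volume : Measure ℝ)) i c
    have h1 : ∀ᵐ x : Fin k → ℝ, ∀ i : Fin k, x i ≠ 0 ∧ x i ≠ 1 := by
      rw [ae_all_iff]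
      intro i
      have hu : (volume : Measure (Fin k → ℝ)) {x | x i = 0 ∨ x i = 1} = 0 := by
        apply le_antisymm _ zero_le
        calc (volume : Measure (Fin k → ℝ)) {x | x i = 0 ∨ x i = 1}
            ≤ (volume : Measure (Fin k → ℝ)) {x | x i = 0} +
              (volume : Measure (Fin k → ℝ)) {x | x i = 1} := by
              apply measure_union_le
          _ = 0 := by rw [h0 i 0, h0 i 1, add_zero]
      rw [ae_iff]
      convert hu using 2
      ext x
      simp only [mem_setOf_eq]
      tauto
    filter_upwards [ae_restrict_mem hSmeas, ae_restrict_of_ae h1] with x hxS hxne i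
    have hxi : x i ∈ Icc (0:ℝ) 1 := by
      rw [hSdef] at hxS
      exact hxS i (mem_univ i)
    exact ⟨lt_of_le_of_ne hxi.1 (Ne.symm (hxne i).1), lt_of_le_of_ne hxi.2 (hxne i).2⟩
  apply tendsto_integral_filter_of_dominated_convergence (bound := fun _ => (1:ℝ))
  · -- measurability
    filter_upwards [eventually_ge_atTop (1:ℝ)] with t ht
    have hInv : Measurable (fun u => FcirInv κ ρ W t u) :=
      measurable_geninv (Fcir_mono hκ hρ hW ht)
    apply Measurable.aestronglyMeasurable
    apply Finset.measurable_prod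
    intro i _
    apply Finset.measurable_prod
    intro j _
    have hdiag : MeasurableSet {x : Fin k → ℝ | x i = x j} :=
      measurableSet_eq_fun (measurable_pi_apply i) (measurable_pi_apply j)
    unfold WhatER
    apply Measurable.ite hdiag
    · by_cases h2 : 2 ∣ A i j
      · simp only [if_pos h2]
        apply (poiP_continuous _).measurable.comp
        exact ((hInv.comp (measurable_pi_apply i)).pow_const 2).div_const _
      · simp only [if_neg h2]
        exact measurable_const
    · apply (poiP_continuous _).measurable.comp
      exact ((hInv.comp (measurable_pi_apply i)).mul
        (hInv.comp (measurable_pi_apply j))).div_const _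
  · -- bound
    filter_upwards [eventually_ge_atTop (1:ℝ)] with t ht
    filter_upwards [hae] with x hx
    have hfac : ∀ (i j : Fin k), 0 ≤ WhatER κ W t (x i) (x j) (A i j) ∧
        WhatER κ W t (x i) (x j) (A i j) ≤ 1 := by
      intro i j
      have hi0 := FcirInv_nonneg (W := W) hκ hρ (hx i).1 t
      have hj0 := FcirInv_nonneg (W := W) hκ hρ (hx j).1 t
      unfold WhatER
      split
      · split
        · have harg : 0 ≤ FcirInv κ ρ W t (x i) ^ 2 / (2 * ρ) := by positivity
          exact ⟨poiP_nonneg harg _, poiP_le_one harg _⟩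
        · exact ⟨le_refl 0, zero_le_one⟩
      · have harg : 0 ≤ FcirInv κ ρ W t (x i) * FcirInv κ ρ W t (x j) / ρ := by positivity
        exact ⟨poiP_nonneg harg _, poiP_le_one harg _⟩
    have hprodnn : 0 ≤ ∏ i : Fin k, ∏ j ∈ Finset.univ.filter (fun j : Fin k => i ≤ j),
        WhatER κ W t (x i) (x j) (A i j) :=
      Finset.prod_nonneg (fun i _ => Finset.prod_nonneg (fun j _ => (hfac i j).1))
    rw [Real.norm_eq_abs, abs_of_nonneg hprodnn]
    apply Finset.prod_le_one (fun i _ => Finset.prod_nonneg (fun j _ => (hfac i j).1))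
    intro i _
    exact Finset.prod_le_one (fun j _ => (hfac i j).1) (fun j _ => (hfac i j).2)
  · -- integrable bound
    have : IntegrableOn (fun _ : Fin k → ℝ => (1:ℝ)) S volume := by
      rw [integrableOn_const_iff]
      right
      rw [hSdef, volume_pi_pi]
      simp [Real.volume_Icc]
    exact this
  · -- a.e. convergence
    filter_upwards [hae] with x hx
    apply tendsto_finset_prod
    intro i _
    apply tendsto_finset_prod
    intro j _
    have hconv : ∀ l : Fin k, Tendsto (fun t => FcirInv κ ρ W t (x l)) atTop
        (𝓝 (FgammaInv κ ρ (x l))) :=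
      fun l => FcirInv_tendsto hκ hρ hW (hx l).1 (hx l).2
    unfold WhatER WhatInfER
    by_cases hij : x i = x j
    · simp only [if_pos hij]
      by_cases h2 : 2 ∣ A i j
      · simp only [if_pos h2]
        apply ((poiP_continuous (A i j / 2)).tendsto _).comp
        exact ((hconv i).pow 2).div_const _
      · simp only [if_neg h2]
        exact tendsto_const_nhds
    · simp only [if_neg hij]
      apply ((poiP_continuous (A i j)).tendsto _).comp
      exact ((hconv i).mul (hconv j)).div_const _

end
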